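/- Fix t ∈ (0,1), a compact set K₁ ⊂ (t,1) and a compact set K₂ ⊂ ℂ ∖ [0,∞). Then there exists a constant M₀ > 0, depending on K₁, K₂ and t, such that for all z, w ∈ ℂ with |w| = r, |z| = R, R > r > tR > 0 and r/R ∈ K₁, and all u ∈ K₂, one has |S(w, z; u, t)| ≤ M₀. -/

import Mathlib

open Complex Real

lemma aux_abs_sin_ge_re (z : ℂ) : |Real.sin z.re| ≤ ‖Complex.sin z‖ := by
  have h : (Complex.sin z).re = Real.sin z.re * Real.cosh z.im := by
    rw [Complex.sin_eq]
    simp [Complex.add_re, Complex.mul_re, Complex.sin_ofReal_re, Complex.sin_ofReal_im,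
      Complex.cos_ofReal_re, Complex.cos_ofReal_im, Complex.cosh_ofReal_re, Complex.cosh_ofReal_im,
      Complex.sinh_ofReal_re, Complex.sinh_ofReal_im]
  calc |Real.sin z.re| ≤ |Real.sin z.re| * Real.cosh z.im :=
        le_mul_of_one_le_right (abs_nonneg _) (Real.one_le_cosh _)
    _ = |(Complex.sin z).re| := by
        rw [h, abs_mul, abs_of_pos (Real.cosh_pos _)]
    _ ≤ ‖Complex.sin z‖ := Complex.abs_re_le_norm _

lemma aux_abs_sin_ge_im (z : ℂ) : (Real.exp |z.im| - 1) / 2 ≤ ‖Complex.sin z‖ := by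
  have hdef : Complex.sin z = (Complex.exp (-z * Complex.I) - Complex.exp (z * Complex.I)) * Complex.I / 2 := rfl
  have h1 : ‖Complex.exp (-z * Complex.I)‖ = Real.exp z.im := by
    rw [Complex.norm_exp]; congr 1; simp
  have h2 : ‖Complex.exp (z * Complex.I)‖ = Real.exp (-z.im) := by
    rw [Complex.norm_exp]; congr 1; simp
  have key : Real.exp |z.im| - 1 ≤ |Real.exp z.im - Real.exp (-z.im)| := by
    rcases le_total 0 z.im with h | h
    · rw [_root_.abs_of_nonneg h, _root_.abs_of_nonneg (by nlinarith [Real.exp_le_exp.mpr (neg_le_self h)] : (0:ℝ) ≤ Real.exp z.im - Real.exp (-z.im))]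
      nlinarith [Real.exp_le_one_iff.mpr (neg_nonpos_of_nonneg h)]
    · rw [_root_.abs_of_nonpos h, _root_.abs_of_nonpos (by nlinarith [Real.exp_le_exp.mpr (le_neg_self_iff.mpr h)] : Real.exp z.im - Real.exp (-z.im) ≤ 0)]
      nlinarith [Real.exp_le_one_iff.mpr h]
  have tri : |Real.exp z.im - Real.exp (-z.im)| ≤ ‖Complex.exp (-z * Complex.I) - Complex.exp (z * Complex.I)‖ := by
    rw [← h1, ← h2]
    exact abs_norm_sub_norm_le _ _
  calc (Real.exp |z.im| - 1) / 2 ≤ |Real.exp z.im - Real.exp (-z.im)| / 2 := by linarith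
    _ ≤ ‖Complex.exp (-z * Complex.I) - Complex.exp (z * Complex.I)‖ / 2 := by linarith
    _ = ‖Complex.sin z‖ := by
        rw [hdef]; rw [norm_div, norm_mul, Complex.norm_I, Complex.norm_two]; ring

lemma aux_abs_cpow {v : ℂ} (hv : v ≠ 0) (s : ℂ) :
    ‖v ^ s‖ = Real.exp (s.re * Real.log (‖v‖) - s.im * Complex.arg v) := by
  rw [Complex.cpow_def_of_ne_zero hv, Complex.norm_exp]
  congr 1
  rw [Complex.mul_re, Complex.log_re, Complex.log_im]
  ring

lemma aux_summable {C ρ : ℝ} (hρ0 : 0 ≤ ρ) (hρ1 : ρ < 1) :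
    Summable (fun m : ℤ => C * ρ ^ m.natAbs) := by
  apply Summable.of_nat_of_neg <;>
    simpa using (summable_geometric_of_lt_one hρ0 hρ1).mul_left C

noncomputable def STerm (t : ℝ) (w z u : ℂ) (m : ℤ) : ℂ :=
  (Real.pi : ℂ) *
      (-u) ^ ((Complex.log w - Complex.log z) / (Real.log t : ℂ) -
        2 * (m : ℂ) * (Real.pi : ℂ) * Complex.I / (Real.log t : ℂ)) /
    Complex.sin (-(Real.pi : ℂ) * ((Complex.log w - Complex.log z) / (Real.log t : ℂ) -
        2 * (m : ℂ) * (Real.pi : ℂ) * Complex.I / (Real.log t : ℂ)))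

noncomputable def SFun (t : ℝ) (w z u : ℂ) : ℂ := ∑' m : ℤ, STerm t w z u m

set_option maxHeartbeats 1000000 in
theorem stmt13 (t : ℝ) (ht : t ∈ Set.Ioo (0:ℝ) 1)
    (K₁ : Set ℝ) (hK₁c : IsCompact K₁) (hK₁ : K₁ ⊆ Set.Ioo t 1)
    (K₂ : Set ℂ) (hK₂c : IsCompact K₂) (hK₂ : K₂ ⊆ (Complex.ofReal '' Set.Ici (0:ℝ))ᶜ) :
    ∃ M₀ > 0, ∀ (z w : ℂ) (r R : ℝ), ‖w‖ = r → ‖z‖ = R →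
      R > r → r > t * R → t * R > 0 → r / R ∈ K₁ →
      ∀ u ∈ K₂, ‖SFun t w z u‖ ≤ M₀ := by
  obtain ⟨ht0, ht1⟩ := ht
  have hL : Real.log t < 0 := Real.log_neg ht0 ht1
  rcases K₁.eq_empty_or_nonempty with h1e | h1n
  · refine ⟨1, one_pos, ?_⟩
    intro z w r R _ _ _ _ _ hm
    rw [h1e] at hm; exact absurd hm (Set.notMem_empty _)
  rcases K₂.eq_empty_or_nonempty with h2e | h2n
  · refine ⟨1, one_pos, ?_⟩
    intro z w r R _ _ _ _ _ _ u hu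
    rw [h2e] at hu; exact absurd hu (Set.notMem_empty _)
  -- constants from K₁
  obtain ⟨x₁, hx₁K, hx₁min⟩ := hK₁c.exists_isMinOn h1n continuousOn_id
  obtain ⟨x₂, hx₂K, hx₂max⟩ := hK₁c.exists_isMaxOn h1n continuousOn_id
  obtain ⟨hx₁t, hx₁1⟩ := hK₁ hx₁K
  obtain ⟨hx₂t, hx₂1⟩ := hK₁ hx₂K
  have hx₁0 : 0 < x₁ := ht0.trans hx₁t
  have hx₂0 : 0 < x₂ := ht0.trans hx₂t
  set εlo : ℝ := Real.log x₂ / Real.log t with hεlo_def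
  set εhi : ℝ := Real.log x₁ / Real.log t with hεhi_def
  have hεlo_pos : 0 < εlo := div_pos_of_neg_of_neg (Real.log_neg hx₂0 hx₂1) hL
  have hεhi_lt1 : εhi < 1 := by
    rw [hεhi_def, div_lt_one_of_neg hL]
    exact Real.log_lt_log ht0 hx₁t
  have hεle : εlo ≤ εhi :=
    div_le_div_of_nonpos_of_le hL.le (Real.log_le_log hx₁0 (hx₁min hx₂K))
  have hεhi_pos : 0 < εhi := hεlo_pos.trans_le hεle
  have hεlo_lt1 : εlo < 1 := lt_of_le_of_lt hεle hεhi_lt1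
  -- minimum of sin (π x) on [εlo, εhi]
  obtain ⟨x₃, hx₃mem, hx₃min⟩ := (isCompact_Icc (a := εlo) (b := εhi)).exists_isMinOn
    (f := fun x : ℝ => Real.sin (Real.pi * x)) (Set.nonempty_Icc.mpr hεle)
    (Continuous.continuousOn (by fun_prop))
  set c3 : ℝ := Real.sin (Real.pi * x₃) with hc3_def
  have hc3 : 0 < c3 := by
    apply Real.sin_pos_of_pos_of_lt_pi
    · exact mul_pos Real.pi_pos (hεlo_pos.trans_le hx₃mem.1)
    · nlinarith [Real.pi_pos, hx₃mem.2, hεhi_lt1]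
  -- constants from K₂
  have hu_ne : ∀ u ∈ K₂, u ≠ 0 := by
    intro u hu h0
    exact (hK₂ hu) ⟨0, Set.self_mem_Ici, by simp [h0]⟩
  have hslit : ∀ u ∈ K₂, -u ∈ Complex.slitPlane := by
    intro u hu
    rw [Complex.mem_slitPlane_iff]
    by_contra h
    push_neg at h
    obtain ⟨h1, h2⟩ := h
    refine (hK₂ hu) ⟨u.re, ?_, ?_⟩
    · simp only [Set.mem_Ici]
      simpa using h1
    · refine Complex.ext (by simp) ?_
      exact (show u.im = 0 by simpa using h2).symm
  obtain ⟨u₂, hu₂K, hu₂max⟩ := hK₂c.exists_isMaxOn h2n continuous_norm.continuousOn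
  set c2 : ℝ := ‖u₂‖ with hc2_def
  have hc2pos : 0 < c2 := by
    rw [hc2_def]
    exact norm_pos_iff.mpr (hu_ne u₂ hu₂K)
  have hargcont : ContinuousOn (fun u : ℂ => |Complex.arg (-u)|) K₂ := by
    intro u hu
    exact (((Complex.continuousAt_arg (hslit u hu)).comp
      (continuous_neg.continuousAt)).abs).continuousWithinAt
  obtain ⟨u₃, hu₃K, hu₃max⟩ := hK₂c.exists_isMaxOn h2n hargcont
  set A : ℝ := |Complex.arg (-u₃)| with hA_def
  have hA_nonneg : 0 ≤ A := abs_nonneg _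
  have hA_lt : A < Real.pi := by
    rcases lt_or_eq_of_le (Complex.abs_arg_le_pi (-u₃)) with h | h
    · exact h
    · exfalso
      have harg : Complex.arg (-u₃) = Real.pi := by
        rcases abs_eq (le_of_lt Real.pi_pos) |>.mp h with h' | h'
        · exact h'
        · exact absurd h' (ne_of_gt (Complex.neg_pi_lt_arg _))
      rw [Complex.arg_eq_pi_iff] at harg
      rcases hslit u₃ hu₃K with hs | hs
      · exact absurd harg.1 (not_lt.mpr hs.le)
      · exact hs harg.2
  set δ : ℝ := Real.pi - A with hδ_def
  have hδpos : 0 < δ := by rw [hδ_def]; linarith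
  set Lp : ℝ := -Real.log t with hLp_def
  have hLp : 0 < Lp := by rw [hLp_def]; linarith
  set ρ : ℝ := Real.exp (-(2 * Real.pi * δ / Lp)) with hρ_def
  have hρ0 : 0 < ρ := Real.exp_pos _
  have hρ1 : ρ < 1 := by
    rw [hρ_def, Real.exp_lt_one_iff]
    have : 0 < 2 * Real.pi * δ / Lp := by positivity
    linarith
  set y₀ : ℝ := Real.log 2 / Real.pi with hy₀_def
  have hy₀pos : 0 < y₀ := div_pos (Real.log_pos one_lt_two) Real.pi_pos
  set N : ℕ := ⌈y₀ * Lp / (2 * Real.pi) + 1⌉₊ with hN_def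
  set B1 : ℝ := max 0 (Real.log c2) with hB1_def
  set C : ℝ := Real.pi * Real.exp B1 *
    max (4 * Real.exp (2 * Real.pi * δ / Lp)) (Real.exp (A * y₀) / (c3 * ρ ^ N)) with hC_def
  have hCpos : 0 < C := by
    rw [hC_def]
    have h4 : (0:ℝ) < 4 * Real.exp (2 * Real.pi * δ / Lp) := by positivity
    exact mul_pos (mul_pos Real.pi_pos (Real.exp_pos _)) (lt_max_of_lt_left h4)
  have hsum : Summable (fun m : ℤ => C * ρ ^ m.natAbs) := aux_summable hρ0.le hρ1
  -- termwise bound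
  have hbound : ∀ (z w : ℂ) (r R : ℝ), ‖w‖ = r → ‖z‖ = R →
      R > r → r > t * R → t * R > 0 → r / R ∈ K₁ →
      ∀ u ∈ K₂, ∀ m : ℤ, ‖STerm t w z u m‖ ≤ C * ρ ^ m.natAbs := by
    intro z w r R hw hz hRr hrtR htR0 hmem u hu m
    have hR0 : 0 < R := by nlinarith
    have hr0 : 0 < r := htR0.trans hrtR
    have hw0 : w ≠ 0 := by
      intro h; rw [h, norm_zero] at hw; exact hr0.ne hw
    have hz0 : z ≠ 0 := by
      intro h; rw [h, norm_zero] at hz; exact hR0.ne hz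
    have hune : u ≠ 0 := hu_ne u hu
    have hnu : -u ≠ 0 := neg_ne_zero.mpr hune
    have hx : x₁ ≤ r / R := hx₁min hmem
    have hx' : r / R ≤ x₂ := hx₂max hmem
    have hrR0 : 0 < r / R := div_pos hr0 hR0
    rw [STerm]
    set s : ℂ := (Complex.log w - Complex.log z) / (Real.log t : ℂ) -
        2 * (m : ℂ) * (Real.pi : ℂ) * Complex.I / (Real.log t : ℂ) with hs_def
    have hs_re : s.re = Real.log (r / R) / Real.log t := by
      rw [hs_def, Real.log_div hr0.ne' hR0.ne']
      simp [Complex.sub_re, Complex.div_ofReal_re, Complex.log_re, hw, hz, Complex.mul_re,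
        Complex.mul_im, Complex.I_re, Complex.I_im]
    have hs_im : s.im = (Complex.arg w - Complex.arg z) / Real.log t
        - 2 * (m : ℝ) * Real.pi / Real.log t := by
      rw [hs_def]
      simp [Complex.sub_im, Complex.div_ofReal_im, Complex.log_im, Complex.mul_re,
        Complex.mul_im, Complex.I_re, Complex.I_im]
    have hre_lo : εlo ≤ s.re := by
      rw [hs_re, hεlo_def]
      exact div_le_div_of_nonpos_of_le hL.le (Real.log_le_log hrR0 hx')
    have hre_hi : s.re ≤ εhi := by
      rw [hs_re, hεhi_def]
      exact div_le_div_of_nonpos_of_le hL.le (Real.log_le_log hx₁0 hx)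
    have hre0 : 0 ≤ s.re := hεlo_pos.le.trans hre_lo
    have hre1 : s.re ≤ 1 := hre_hi.trans hεhi_lt1.le
    set y : ℝ := |s.im| with hy_def
    have hy0 : 0 ≤ y := abs_nonneg _
    have harg : |Complex.arg w - Complex.arg z| ≤ 2 * Real.pi := by
      have h1 := abs_le.mp (Complex.abs_arg_le_pi w)
      have h2 := abs_le.mp (Complex.abs_arg_le_pi z)
      exact abs_le.mpr ⟨by linarith [h1.1, h2.2], by linarith [h1.2, h2.1]⟩
    have harg2 : |(Complex.arg w - Complex.arg z) / Real.log t| ≤ 2 * Real.pi / Lp := by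
      rw [abs_div, abs_of_neg hL, ← hLp_def]
      gcongr
    have hy_lo : 2 * Real.pi * (m.natAbs : ℝ) / Lp - 2 * Real.pi / Lp ≤ y := by
      have key : 2 * (m : ℝ) * Real.pi / Real.log t
          = (Complex.arg w - Complex.arg z) / Real.log t - s.im := by
        rw [hs_im]; ring
      have habs : |2 * (m : ℝ) * Real.pi / Real.log t| = 2 * Real.pi * (m.natAbs : ℝ) / Lp := by
        rw [abs_div, abs_of_neg hL, ← hLp_def, Nat.cast_natAbs, Int.cast_abs]
        congr 1
        rw [abs_mul, abs_mul, _root_.abs_of_pos Real.pi_pos]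
        norm_num
        ring
      have tri : |2 * (m : ℝ) * Real.pi / Real.log t|
          ≤ |(Complex.arg w - Complex.arg z) / Real.log t| + y := by
        rw [key, sub_eq_add_neg]
        exact (abs_add_le _ _).trans (by rw [abs_neg])
      rw [habs] at tri
      linarith
    -- numerator bound
    have hnum : ‖(Real.pi : ℂ) * (-u) ^ s‖ ≤ Real.pi * Real.exp (B1 + A * y) := by
      rw [norm_mul, Complex.norm_real, Real.norm_eq_abs, _root_.abs_of_pos Real.pi_pos, aux_abs_cpow hnu]
      have habsu : ‖-u‖ = ‖u‖ := by simp
      rw [habsu]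
      refine mul_le_mul_of_nonneg_left ?_ Real.pi_pos.le
      rw [Real.exp_le_exp]
      have t1 : s.re * Real.log (‖u‖) ≤ B1 := by
        rcases le_or_gt (Real.log (‖u‖)) 0 with h | h
        · exact (mul_nonpos_of_nonneg_of_nonpos hre0 h).trans (le_max_left _ _)
        · calc s.re * Real.log (‖u‖) ≤ 1 * Real.log (‖u‖) :=
              mul_le_mul_of_nonneg_right hre1 h.le
            _ = Real.log (‖u‖) := one_mul _
            _ ≤ Real.log c2 := Real.log_le_log (norm_pos_iff.mpr hune) (hu₂max hu)
            _ ≤ B1 := le_max_right _ _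
      have t2 : -(s.im * Complex.arg (-u)) ≤ A * y := by
        calc -(s.im * Complex.arg (-u)) ≤ |s.im * Complex.arg (-u)| := neg_le_abs _
          _ = y * |Complex.arg (-u)| := by rw [abs_mul]
          _ ≤ y * A := mul_le_mul_of_nonneg_left (hu₃max hu) hy0
          _ = A * y := mul_comm _ _
      linarith
    set d : ℝ := ‖Complex.sin (-(Real.pi : ℂ) * s)‖ with hd_def
    have hd1 : c3 ≤ d := by
      have h1 := aux_abs_sin_ge_re (-(Real.pi : ℂ) * s)
      have hre2 : (-(Real.pi : ℂ) * s).re = -(Real.pi * s.re) := by simp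
      rw [hre2, Real.sin_neg, abs_neg] at h1
      refine le_trans (le_trans ?_ (le_abs_self _)) h1
      exact hx₃min ⟨hre_lo, hre_hi⟩
    have hd2 : (Real.exp (Real.pi * y) - 1) / 2 ≤ d := by
      have h2 := aux_abs_sin_ge_im (-(Real.pi : ℂ) * s)
      have him2 : |(-(Real.pi : ℂ) * s).im| = Real.pi * y := by
        have he : (-(Real.pi : ℂ) * s).im = -(Real.pi * s.im) := by simp
        rw [he, abs_neg, abs_mul, _root_.abs_of_pos Real.pi_pos, hy_def]
      rw [him2] at h2
      exact h2
    rw [norm_div]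
    rcases le_or_gt (Real.log 2) (Real.pi * y) with hcase | hcase
    · have hexp2 : (2 : ℝ) ≤ Real.exp (Real.pi * y) := by
        rw [← Real.exp_log two_pos]
        exact Real.exp_le_exp.mpr hcase
      have hd3 : Real.exp (Real.pi * y) / 4 ≤ d := by
        refine le_trans ?_ hd2
        linarith
      have hmono : Real.exp (-(δ * y)) ≤ Real.exp (2 * Real.pi * δ / Lp) * ρ ^ m.natAbs := by
        rw [hρ_def, ← Real.exp_nat_mul, ← Real.exp_add]
        apply Real.exp_le_exp.mpr
        have hyd := mul_le_mul_of_nonneg_left hy_lo hδpos.le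
        have h7 : 2 * Real.pi * δ / Lp + (m.natAbs : ℝ) * -(2 * Real.pi * δ / Lp)
            = -(δ * (2 * Real.pi * (m.natAbs : ℝ) / Lp - 2 * Real.pi / Lp)) := by ring
        rw [h7]
        exact neg_le_neg hyd
      have heq : Real.pi * Real.exp (B1 + A * y) / (Real.exp (Real.pi * y) / 4)
          = 4 * Real.pi * Real.exp B1 * Real.exp (-(δ * y)) := by
        have h1 : Real.exp (B1 + A * y)
            = Real.exp B1 * (Real.exp (-(δ * y)) * Real.exp (Real.pi * y)) := by
          rw [← Real.exp_add, ← Real.exp_add]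
          congr 1
          rw [hδ_def]
          ring
        rw [h1, div_eq_iff (by positivity : (0:ℝ) < Real.exp (Real.pi * y) / 4).ne']
        ring
      refine le_trans (div_le_div₀ (by positivity) hnum (by positivity) hd3) ?_
      rw [heq]
      calc 4 * Real.pi * Real.exp B1 * Real.exp (-(δ * y))
          ≤ 4 * Real.pi * Real.exp B1 * (Real.exp (2 * Real.pi * δ / Lp) * ρ ^ m.natAbs) :=
            mul_le_mul_of_nonneg_left hmono (by positivity)
        _ = Real.pi * Real.exp B1 * (4 * Real.exp (2 * Real.pi * δ / Lp)) * ρ ^ m.natAbs := by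
            ring
        _ ≤ Real.pi * Real.exp B1 *
            max (4 * Real.exp (2 * Real.pi * δ / Lp)) (Real.exp (A * y₀) / (c3 * ρ ^ N)) *
            ρ ^ m.natAbs := by
            gcongr
            exact le_max_left _ _
        _ = C * ρ ^ m.natAbs := by rw [hC_def]
    · have hylt : y < y₀ := by
        rw [hy₀_def, lt_div_iff₀ Real.pi_pos]
        linarith [hcase]
      have hnN : m.natAbs ≤ N := by
        have h2 : 2 * Real.pi * (m.natAbs : ℝ) / Lp ≤ y₀ + 2 * Real.pi / Lp := by
          linarith [hy_lo, hylt]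
        rw [div_le_iff₀ hLp] at h2
        have h3 : (y₀ + 2 * Real.pi / Lp) * Lp = y₀ * Lp + 2 * Real.pi := by
          field_simp
        rw [h3] at h2
        have h1 : (m.natAbs : ℝ) ≤ y₀ * Lp / (2 * Real.pi) + 1 := by
          rw [show y₀ * Lp / (2 * Real.pi) + 1 = (y₀ * Lp + 2 * Real.pi) / (2 * Real.pi) by
            field_simp]
          rw [le_div_iff₀ (by positivity)]
          linarith [h2]
        have h4 := h1.trans (Nat.le_ceil _)
        exact_mod_cast h4
      have hρn : ρ ^ N ≤ ρ ^ m.natAbs := pow_le_pow_of_le_one hρ0.le hρ1.le hnN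
      refine le_trans (div_le_div₀ (by positivity) hnum hc3 hd1) ?_
      calc Real.pi * Real.exp (B1 + A * y) / c3
          ≤ Real.pi * Real.exp (B1 + A * y₀) / c3 := by
            gcongr
        _ = Real.pi * Real.exp B1 * (Real.exp (A * y₀) / (c3 * ρ ^ N)) * ρ ^ N := by
            rw [Real.exp_add,
              show Real.pi * Real.exp B1 * (Real.exp (A * y₀) / (c3 * ρ ^ N)) * ρ ^ N
                = Real.pi * Real.exp B1 * Real.exp (A * y₀) * ρ ^ N / (c3 * ρ ^ N) by ring,
              mul_comm c3 (ρ ^ N), ← div_div,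
              mul_div_cancel_right₀ _ (pow_ne_zero N hρ0.ne')]
            ring
        _ ≤ Real.pi * Real.exp B1 *
            max (4 * Real.exp (2 * Real.pi * δ / Lp)) (Real.exp (A * y₀) / (c3 * ρ ^ N)) *
            ρ ^ N := by
            gcongr
            exact le_max_right _ _
        _ = C * ρ ^ N := by rw [hC_def]
        _ ≤ C * ρ ^ m.natAbs := mul_le_mul_of_nonneg_left hρn hCpos.le
  refine ⟨∑' m : ℤ, C * ρ ^ m.natAbs, ?_, ?_⟩
  · have h0 : C * ρ ^ (0:ℤ).natAbs ≤ ∑' m : ℤ, C * ρ ^ m.natAbs :=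
      Summable.le_tsum hsum 0 (fun j _ => by positivity)
    simpa using lt_of_lt_of_le (by simpa using hCpos) h0
  · intro z w r R hw hz h1 h2 h3 h4 u hu
    rw [SFun]
    exact tsum_of_norm_bounded hsum.hasSum
      (fun m => by exact hbound z w r R hw hz h1 h2 h3 h4 u hu m)
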